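/- Fix n ≥ 1 and a symmetric matrix C_e ∈ ℝ^{n×n}. Let M be orthogonal and Ξ ∈ ℝ^{n×n} skew-symmetric. Then the map t ↦ f(M·exp(tΞ)) is differentiable at t = 0 with derivative d/dt|_{t=0} f(M exp(tΞ)) = −⟨Ω(M), Ξ⟩_F. Consequently, the derivative of f along every such one-parameter curve vanishes at M if and only if Ω(M) = 0, i.e., if and only if (A(M)_{jj} − A(M)_{ii})·A(M)_{ij} = 0 for all i ≠ j. -/

import Mathlib

open Matrix

/-- The diagonal matrix whose diagonal agrees with `X`. -/
noncomputable def diagPart {n : ℕ} (X : Matrix (Fin n) (Fin n) ℝ) :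
    Matrix (Fin n) (Fin n) ℝ :=
  Matrix.diagonal (fun i => X i i)

/-- Frobenius norm of a real square matrix. -/
noncomputable def frobNorm {n : ℕ} (X : Matrix (Fin n) (Fin n) ℝ) : ℝ :=
  Real.sqrt (∑ i, ∑ j, (X i j) ^ 2)

/-- Frobenius inner product `⟨X, Y⟩_F = tr(Xᵀ Y)`. -/
noncomputable def frobInner {n : ℕ} (X Y : Matrix (Fin n) (Fin n) ℝ) : ℝ :=
  Matrix.trace (Xᵀ * Y)

/-- Rotated covariance `A(M) = Mᵀ C_e M`. -/
noncomputable def rotA {n : ℕ} (Ce M : Matrix (Fin n) (Fin n) ℝ) :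
    Matrix (Fin n) (Fin n) ℝ := Mᵀ * Ce * M

/-- The commutator generator `Ω(M) = A D − D A`. -/
noncomputable def genOmega {n : ℕ} (Ce M : Matrix (Fin n) (Fin n) ℝ) :
    Matrix (Fin n) (Fin n) ℝ :=
  rotA Ce M * diagPart (rotA Ce M) - diagPart (rotA Ce M) * rotA Ce M

/-- The diagonalization objective `f(M) = (1/2)‖off(A(M))‖_F²`. -/
noncomputable def objF {n : ℕ} (Ce M : Matrix (Fin n) (Fin n) ℝ) : ℝ :=
  (1 / 2) * frobNorm (rotA Ce M - diagPart (rotA Ce M)) ^ 2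

section aux
variable {n : ℕ}

attribute [local instance] Matrix.linftyOpNormedAddCommGroup Matrix.linftyOpNormedRing
  Matrix.linftyOpNormedAlgebra

noncomputable instance : CompleteSpace (Matrix (Fin n) (Fin n) ℝ) :=
  FiniteDimensional.complete ℝ _

lemma hasDerivAt_entry {f : ℝ → Matrix (Fin n) (Fin n) ℝ} {f' : Matrix (Fin n) (Fin n) ℝ}
    {t : ℝ} (hf : HasDerivAt f f' t) (i j : Fin n) :
    HasDerivAt (fun s => f s i j) (f' i j) t := by
  let L : Matrix (Fin n) (Fin n) ℝ →ₗ[ℝ] ℝ :=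
    { toFun := fun X => X i j, map_add' := fun _ _ => rfl, map_smul' := fun _ _ => rfl }
  have := (LinearMap.toContinuousLinearMap L).hasFDerivAt.comp_hasDerivAt t hf
  exact this

lemma hasDerivAt_exp_entry (Ξ : Matrix (Fin n) (Fin n) ℝ) (i j : Fin n) :
    HasDerivAt (fun t : ℝ => NormedSpace.exp (t • Ξ) i j) (Ξ i j) 0 := by
  have h := hasDerivAt_exp_smul_const (𝕂 := ℝ) Ξ (0 : ℝ)
  simp only [zero_smul, NormedSpace.exp_zero, one_mul] at h
  exact hasDerivAt_entry h i j

lemma hasDerivAt_B_entry (A Ξ : Matrix (Fin n) (Fin n) ℝ) (i j : Fin n) :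
    HasDerivAt
      (fun t : ℝ => ((NormedSpace.exp (t • Ξ))ᵀ * A * NormedSpace.exp (t • Ξ)) i j)
      ((Ξᵀ * A + A * Ξ) i j) 0 := by
  have key : HasDerivAt
      (fun t : ℝ => ∑ k, (∑ l, NormedSpace.exp (t • Ξ) l i * A l k) *
        NormedSpace.exp (t • Ξ) k j)
      (∑ k, ((∑ l, Ξ l i * A l k) * (1 : Matrix (Fin n) (Fin n) ℝ) k j +
        (∑ l, (1 : Matrix (Fin n) (Fin n) ℝ) l i * A l k) * Ξ k j)) 0 := by
    apply HasDerivAt.fun_sum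
    intro k _
    have h1 : HasDerivAt (fun t : ℝ => ∑ l, NormedSpace.exp (t • Ξ) l i * A l k)
        (∑ l, Ξ l i * A l k) 0 := by
      apply HasDerivAt.fun_sum
      intro l _
      exact (hasDerivAt_exp_entry Ξ l i).mul_const (A l k)
    have : HasDerivAt (fun t : ℝ => (∑ l, NormedSpace.exp (t • Ξ) l i * A l k) *
        NormedSpace.exp (t • Ξ) k j) _ 0 := h1.mul (hasDerivAt_exp_entry Ξ k j)
    simpa [zero_smul, NormedSpace.exp_zero] using this
  have hfun : (fun t : ℝ => ((NormedSpace.exp (t • Ξ))ᵀ * A * NormedSpace.exp (t • Ξ)) i j)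
      = (fun t : ℝ => ∑ k, (∑ l, NormedSpace.exp (t • Ξ) l i * A l k) *
        NormedSpace.exp (t • Ξ) k j) := by
    funext t
    simp [Matrix.mul_apply, Matrix.transpose_apply]
  rw [hfun]
  convert key using 1
  simp [Matrix.mul_apply, Matrix.one_apply, Matrix.add_apply, Matrix.transpose_apply,
    Finset.sum_add_distrib, Finset.sum_ite_eq]

lemma frobInner_eq_sum (X Y : Matrix (Fin n) (Fin n) ℝ) :
    frobInner X Y = ∑ i, ∑ j, X i j * Y i j := by
  simp [frobInner, Matrix.trace, Matrix.mul_apply, Matrix.diag, Matrix.transpose_apply]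
  exact Finset.sum_comm

lemma off_apply (X : Matrix (Fin n) (Fin n) ℝ) (i j : Fin n) :
    (X - diagPart X) i j = if i = j then 0 else X i j := by
  simp [diagPart, Matrix.sub_apply, Matrix.diagonal_apply]
  split_ifs with h
  · subst h; simp
  · simp

lemma objF_eq (Ce N : Matrix (Fin n) (Fin n) ℝ) :
    objF Ce N = (1 / 2) * ∑ i, ∑ j, (if i = j then (0:ℝ) else rotA Ce N i j) ^ 2 := by
  rw [objF, frobNorm, Real.sq_sqrt (by positivity)]
  congr 1
  refine Finset.sum_congr rfl fun i _ => Finset.sum_congr rfl fun j _ => ?_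
  rw [off_apply]

lemma diagPart_transpose (A : Matrix (Fin n) (Fin n) ℝ) :
    (diagPart A)ᵀ = diagPart A := by
  simp [diagPart, Matrix.diagonal_transpose]

lemma trace_identity (A Ξ : Matrix (Fin n) (Fin n) ℝ) (hA : Aᵀ = A) (hΞ : Ξᵀ = -Ξ) :
    frobInner (A - diagPart A) (Ξᵀ * A + A * Ξ)
      = -(frobInner (A * diagPart A - diagPart A * A) Ξ) := by
  set D := diagPart A with hD
  have hDT : Dᵀ = D := diagPart_transpose A
  have hoffT : (A - D)ᵀ = A - D := by rw [Matrix.transpose_sub, hA, hDT]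
  have h0 : Matrix.trace (A * (A * Ξ)) = 0 := by
    have : Matrix.trace (A * (A * Ξ)) = -Matrix.trace (A * (A * Ξ)) := by
      calc Matrix.trace (A * (A * Ξ)) = Matrix.trace ((A * (A * Ξ))ᵀ) :=
            (Matrix.trace_transpose _).symm
        _ = Matrix.trace ((A * Ξ)ᵀ * Aᵀ) := by rw [Matrix.transpose_mul]
        _ = Matrix.trace (Ξᵀ * Aᵀ * Aᵀ) := by rw [Matrix.transpose_mul]
        _ = Matrix.trace (-Ξ * A * A) := by rw [hΞ, hA]
        _ = -Matrix.trace (Ξ * A * A) := by rw [Matrix.neg_mul, Matrix.neg_mul,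
            Matrix.trace_neg]
        _ = -Matrix.trace (A * (A * Ξ)) := by
            rw [Matrix.mul_assoc, Matrix.trace_mul_comm, Matrix.mul_assoc]
    linarith
  have h1 : Matrix.trace (A * (D * Ξ)) = -Matrix.trace (D * (A * Ξ)) := by
    calc Matrix.trace (A * (D * Ξ)) = Matrix.trace ((A * (D * Ξ))ᵀ) :=
          (Matrix.trace_transpose _).symm
      _ = Matrix.trace ((D * Ξ)ᵀ * Aᵀ) := by rw [Matrix.transpose_mul]
      _ = Matrix.trace (Ξᵀ * Dᵀ * Aᵀ) := by rw [Matrix.transpose_mul]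
      _ = Matrix.trace (-Ξ * D * A) := by rw [hΞ, hDT, hA]
      _ = -Matrix.trace (Ξ * D * A) := by rw [Matrix.neg_mul, Matrix.neg_mul, Matrix.trace_neg]
      _ = -Matrix.trace (D * (A * Ξ)) := by
          rw [Matrix.mul_assoc, Matrix.trace_mul_comm, Matrix.mul_assoc]
  have h3 : Matrix.trace ((A - D) * (Ξᵀ * A)) = Matrix.trace ((A - D) * (A * Ξ)) := by
    calc Matrix.trace ((A - D) * (Ξᵀ * A)) = Matrix.trace (((A - D) * (Ξᵀ * A))ᵀ) :=
          (Matrix.trace_transpose _).symm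
      _ = Matrix.trace ((Ξᵀ * A)ᵀ * (A - D)ᵀ) := by rw [Matrix.transpose_mul]
      _ = Matrix.trace (Aᵀ * Ξᵀᵀ * (A - D)) := by rw [Matrix.transpose_mul, hoffT]
      _ = Matrix.trace (A * Ξ * (A - D)) := by rw [hA, Matrix.transpose_transpose]
      _ = Matrix.trace ((A - D) * (A * Ξ)) := Matrix.trace_mul_comm _ _
  have expand : frobInner (A - D) (Ξᵀ * A + A * Ξ)
      = Matrix.trace ((A - D) * (Ξᵀ * A)) + Matrix.trace ((A - D) * (A * Ξ)) := by
    rw [frobInner, hoffT, Matrix.mul_add, Matrix.trace_add]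
  have expand2 : Matrix.trace ((A - D) * (A * Ξ))
      = Matrix.trace (A * (A * Ξ)) - Matrix.trace (D * (A * Ξ)) := by
    rw [Matrix.sub_mul, Matrix.trace_sub]
  have expand3 : frobInner (A * D - D * A) Ξ
      = Matrix.trace (D * (A * Ξ)) - Matrix.trace (A * (D * Ξ)) := by
    rw [frobInner, Matrix.transpose_sub, Matrix.transpose_mul, Matrix.transpose_mul, hA, hDT,
      Matrix.sub_mul, Matrix.trace_sub, Matrix.mul_assoc, Matrix.mul_assoc]
  rw [expand, h3, expand2, expand3]
  linarith

lemma genOmega_apply (Ce M : Matrix (Fin n) (Fin n) ℝ) (i j : Fin n) :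
    genOmega Ce M i j = (rotA Ce M j j - rotA Ce M i i) * rotA Ce M i j := by
  simp [genOmega, diagPart, Matrix.sub_apply, Matrix.mul_diagonal, Matrix.diagonal_mul]
  ring

lemma rotA_symm (Ce M : Matrix (Fin n) (Fin n) ℝ) (hCe : Ceᵀ = Ce) :
    (rotA Ce M)ᵀ = rotA Ce M := by
  simp [rotA, Matrix.transpose_mul, hCe, Matrix.mul_assoc]

lemma hasDerivAt_objF (Ce M Ξ : Matrix (Fin n) (Fin n) ℝ) (hCe : Ceᵀ = Ce) (hΞ : Ξᵀ = -Ξ) :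
    HasDerivAt (fun t : ℝ => objF Ce (M * NormedSpace.exp (t • Ξ)))
      (-(frobInner (genOmega Ce M) Ξ)) 0 := by
  set A := rotA Ce M with hA
  have hAsymm : Aᵀ = A := rotA_symm Ce M hCe
  have hfun : (fun t : ℝ => objF Ce (M * NormedSpace.exp (t • Ξ)))
      = fun t : ℝ => (1 / 2) * ∑ i, ∑ j, (if i = j then (0:ℝ)
          else ((NormedSpace.exp (t • Ξ))ᵀ * A * NormedSpace.exp (t • Ξ)) i j) ^ 2 := by
    funext t
    rw [objF_eq]
    have : rotA Ce (M * NormedSpace.exp (t • Ξ))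
        = (NormedSpace.exp (t • Ξ))ᵀ * A * NormedSpace.exp (t • Ξ) := by
      simp [hA, rotA, Matrix.transpose_mul, Matrix.mul_assoc]
    rw [this]
  rw [hfun]
  have hsum : HasDerivAt (fun t : ℝ => ∑ i, ∑ j, (if i = j then (0:ℝ)
        else ((NormedSpace.exp (t • Ξ))ᵀ * A * NormedSpace.exp (t • Ξ)) i j) ^ 2)
      (∑ i, ∑ j, (if i = j then (0:ℝ) else 2 * A i j * ((Ξᵀ * A + A * Ξ) i j))) 0 := by
    apply HasDerivAt.fun_sum
    intro i _
    apply HasDerivAt.fun_sum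
    intro j _
    by_cases hij : i = j
    · simp only [if_pos hij]
      exact hasDerivAt_const (0:ℝ) ((0:ℝ)^2)
    · simp only [if_neg hij]
      have h : HasDerivAt (fun t : ℝ =>
          ((NormedSpace.exp (t • Ξ))ᵀ * A * NormedSpace.exp (t • Ξ)) i j ^ 2) _ 0 :=
        (hasDerivAt_B_entry A Ξ i j).pow 2
      refine h.congr_deriv ?_
      simp [zero_smul, NormedSpace.exp_zero]
  have h : HasDerivAt (fun t : ℝ => (1 / 2 : ℝ) * ∑ i, ∑ j, (if i = j then (0:ℝ)
      else ((NormedSpace.exp (t • Ξ))ᵀ * A * NormedSpace.exp (t • Ξ)) i j) ^ 2) _ 0 :=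
    hsum.const_mul (1/2 : ℝ)
  convert h using 1
  simp only [genOmega, ← hA]
  rw [← trace_identity A Ξ hAsymm hΞ, frobInner_eq_sum, Finset.mul_sum]
  refine Finset.sum_congr rfl fun i _ => ?_
  rw [Finset.mul_sum]
  refine Finset.sum_congr rfl fun j _ => ?_
  rw [off_apply]
  split_ifs <;> ring

lemma frobInner_self_eq_zero (X : Matrix (Fin n) (Fin n) ℝ) (h : frobInner X X = 0) :
    X = 0 := by
  rw [frobInner_eq_sum] at h
  ext i j
  have h1 := (Finset.sum_eq_zero_iff_of_nonneg (fun i _ =>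
    Finset.sum_nonneg fun j _ => mul_self_nonneg (X i j))).mp h i (Finset.mem_univ i)
  have h2 := (Finset.sum_eq_zero_iff_of_nonneg (fun j _ =>
    mul_self_nonneg (X i j))).mp h1 j (Finset.mem_univ j)
  simpa [mul_self_eq_zero] using h2

end aux

/-- **First variation and critical point characterization**: along every geodesic
`t ↦ M exp(tΞ)` with `Ξ` skew-symmetric, `d/dt|₀ f = −⟨Ω(M), Ξ⟩_F`; hence the
derivative vanishes along all such curves iff `Ω(M) = 0`, iff
`(A_jj − A_ii) A_ij = 0` for all `i ≠ j`. -/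
theorem first_variation_and_critical_points {n : ℕ} (hn : 1 ≤ n)
    (Ce M : Matrix (Fin n) (Fin n) ℝ) (hCe : Ceᵀ = Ce) (hM : Mᵀ * M = 1) :
    (∀ Ξ : Matrix (Fin n) (Fin n) ℝ, Ξᵀ = -Ξ →
      HasDerivAt (fun t : ℝ => objF Ce (M * NormedSpace.exp (t • Ξ)))
        (-(frobInner (genOmega Ce M) Ξ)) 0) ∧
    ((∀ Ξ : Matrix (Fin n) (Fin n) ℝ, Ξᵀ = -Ξ →
      deriv (fun t : ℝ => objF Ce (M * NormedSpace.exp (t • Ξ))) 0 = 0) ↔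
      genOmega Ce M = 0) ∧
    (genOmega Ce M = 0 ↔
      ∀ i j : Fin n, i ≠ j → (rotA Ce M j j - rotA Ce M i i) * rotA Ce M i j = 0) := by
  have hAsymm : (rotA Ce M)ᵀ = rotA Ce M := rotA_symm Ce M hCe
  have hΩskew : (genOmega Ce M)ᵀ = -(genOmega Ce M) := by
    rw [genOmega, Matrix.transpose_sub, Matrix.transpose_mul, Matrix.transpose_mul,
      hAsymm, diagPart_transpose]
    exact (neg_sub _ _).symm
  have part1 : ∀ Ξ : Matrix (Fin n) (Fin n) ℝ, Ξᵀ = -Ξ →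
      HasDerivAt (fun t : ℝ => objF Ce (M * NormedSpace.exp (t • Ξ)))
        (-(frobInner (genOmega Ce M) Ξ)) 0 :=
    fun Ξ hΞ => hasDerivAt_objF Ce M Ξ hCe hΞ
  refine ⟨part1, ?_, ?_⟩
  · constructor
    · intro h
      have h1 := h (genOmega Ce M) hΩskew
      rw [(part1 (genOmega Ce M) hΩskew).deriv, neg_eq_zero] at h1
      exact frobInner_self_eq_zero _ h1
    · intro h Ξ hΞ
      rw [(part1 Ξ hΞ).deriv, h]
      simp [frobInner]
  · constructor
    · intro h i j _
      rw [← genOmega_apply, h]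
      simp
    · intro h
      ext i j
      rw [genOmega_apply]
      by_cases hij : i = j
      · subst hij; simp
      · simpa using h i j hij
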